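/- Let Σ be a finite alphabet of size q ≥ 2, n ≥ 1, δ ∈ (0,1), and set α = (1 − 1/q)(1 + δ). Let (K, Enc, Dec) be a finitary messageless secret-key code over Σ with codeword length n and soundness error ε_s. Let f be the truncated uniform resampler with budget αn, applied to γ = Enc(sk) with fresh independent randomness, and suppose P[Dec(sk, f(γ)) ≠ tampered ∧ f(γ) ≠ γ] ≤ ε_t. Then ε_s + ε_t ≥ 1 − q^{−n} − exp(−δ²(1 − 1/q)n/3). In particular, since f always changes at most αn coordinates, no such code can have both ε_s and ε_t negligible in n against tampering at rate α = (1 − 1/q)(1 + δ). -/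

import Mathlib

open Finset Classical

/-- Decoding outcomes of a messageless secret-key code. -/
inductive DecOut where
  | valid
  | invalid
  | tampered
deriving DecidableEq

/-- The truncated uniform resampler with budget `b`: on codeword `γ` and uniform
randomness `u`, it outputs `u` if `dist(u, γ) ≤ b` and `γ` otherwise; it always
changes at most `b` coordinates of its input. -/
noncomputable def resample {S : Type} [Fintype S] [DecidableEq S] {n : ℕ}
    (b : ℝ) (γ u : Fin n → S) : Fin n → S :=
  if (hammingDist u γ : ℝ) ≤ b then u else γ

set_option maxHeartbeats 1000000 in
/-- Over an alphabet of size `q ≥ 2`, for `δ ∈ (0,1)` and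
`α = (1 - 1/q)(1 + δ)`: any messageless secret-key code with soundness error `εs`
whose tamper-detection failure against the truncated uniform resampler with budget
`α·n` is at most `εt` satisfies `εs + εt ≥ 1 - q^(-n) - exp(-δ²(1 - 1/q)n/3)`. -/
theorem stmt_1
    {S K : Type} [Fintype S] [DecidableEq S] [Fintype K] [Nonempty K]
    {n : ℕ} (hn : 1 ≤ n) (hq : 2 ≤ Fintype.card S)
    (δ : ℝ) (hδ0 : 0 < δ) (hδ1 : δ < 1)
    (w : K → ℝ) (hw0 : ∀ k, 0 ≤ w k) (hw1 : ∑ k, w k = 1)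
    (Enc : K → Fin n → S) (Dec : K → (Fin n → S) → DecOut)
    (εs εt : ℝ)
    (hsound : ∀ γ : Fin n → S,
      (∑ k, if Dec k γ ≠ DecOut.invalid then w k else 0) ≤ εs)
    (htamper :
      (∑ k, ∑ u : Fin n → S,
        if Dec k (resample ((1 - (Fintype.card S : ℝ)⁻¹) * (1 + δ) * n) (Enc k) u)
              ≠ DecOut.tampered
           ∧ resample ((1 - (Fintype.card S : ℝ)⁻¹) * (1 + δ) * n) (Enc k) u ≠ Enc k
        then w k * ((Fintype.card S : ℝ) ^ n)⁻¹ else 0) ≤ εt) :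
    1 - ((Fintype.card S : ℝ) ^ n)⁻¹
      - Real.exp (-(δ ^ 2 * (1 - (Fintype.card S : ℝ)⁻¹) * n / 3)) ≤ εs + εt := by
  classical
  set q : ℝ := (Fintype.card S : ℝ) with hqdef
  have hq2 : (2 : ℝ) ≤ q := by rw [hqdef]; exact_mod_cast hq
  have hq0 : (0 : ℝ) < q := by linarith
  have hqinv : q⁻¹ ≤ 1 / 2 := by
    rw [inv_le_comm₀ hq0 (by norm_num)]
    norm_num
    linarith
  have hp0 : (0 : ℝ) < 1 - q⁻¹ := by linarith
  set a : ℝ := (1 - q⁻¹) * (1 + δ) * n with hadef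
  set N : ℝ := q ^ n with hNdef
  have hN0 : (0 : ℝ) < N := pow_pos hq0 n
  set E : ℝ := Real.exp (-(δ ^ 2 * (1 - q⁻¹) * n / 3)) with hEdef
  have ha0 : 0 ≤ a := by positivity
  -- Chernoff bound for the truncated resampler's bad event
  have chernoff : ∀ γ : Fin n → S,
      (∑ u : Fin n → S, if ¬((hammingDist u γ : ℝ) ≤ a) then N⁻¹ else 0) ≤ E := by
    intro γ
    set t : ℝ := 2 * δ / 3 with htdef
    have ht0 : 0 < t := by positivity
    have ht1 : t ≤ 1 := by rw [htdef]; linarith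
    have hexpt1 : (1 : ℝ) ≤ Real.exp t := Real.one_le_exp ht0.le
    have hexp_t : Real.exp t ≤ 1 + t + t ^ 2 * (3 / 4) := by
      have h := Real.exp_bound' ht0.le ht1 (n := 2) (by norm_num)
      simp [Finset.sum_range_succ, Nat.factorial] at h
      nlinarith [h]
    -- MGF computation
    have key : (∑ u : Fin n → S, Real.exp (t * (hammingDist u γ : ℝ)))
        = (1 + (q - 1) * Real.exp t) ^ n := by
      have hform : ∀ u : Fin n → S, Real.exp (t * (hammingDist u γ : ℝ))
          = ∏ i, (if u i ≠ γ i then Real.exp t else 1) := by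
        intro u
        have hd : (hammingDist u γ : ℝ) = ∑ i, if u i ≠ γ i then (1 : ℝ) else 0 := by
          rw [hammingDist, Finset.card_filter]
          push_cast
          rfl
        rw [hd, Finset.mul_sum, Real.exp_sum]
        refine Finset.prod_congr rfl fun i _ => ?_
        by_cases h : u i = γ i <;> simp [h]
      rw [Finset.sum_congr rfl fun u _ => hform u]
      have hswap : (∑ u : Fin n → S, ∏ i, (if u i ≠ γ i then Real.exp t else 1))
          = ∏ i, ∑ s : S, (if s ≠ γ i then Real.exp t else 1) := by
        rw [← Fintype.piFinset_univ]
        exact Finset.sum_prod_piFinset univ fun i s => if s ≠ γ i then Real.exp t else 1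
      rw [hswap]
      have hcol : ∀ i : Fin n, (∑ s : S, if s ≠ γ i then Real.exp t else 1)
          = 1 + (q - 1) * Real.exp t := by
        intro i
        have hpt : ∀ s : S, (if s ≠ γ i then Real.exp t else (1:ℝ))
            = Real.exp t + (if s = γ i then 1 - Real.exp t else 0) := by
          intro s; by_cases h : s = γ i <;> simp [h]
        rw [Finset.sum_congr rfl fun s _ => hpt s, Finset.sum_add_distrib,
          Finset.sum_const, Finset.sum_ite_eq' Finset.univ (γ i),
          Finset.card_univ]
        simp only [Finset.mem_univ, if_true, nsmul_eq_mul, ← hqdef]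
        ring
      rw [Finset.prod_congr rfl fun i _ => hcol i, Finset.prod_const, Finset.card_univ,
        Fintype.card_fin]
    -- Markov step
    have markov : (∑ u : Fin n → S, if ¬((hammingDist u γ : ℝ) ≤ a) then N⁻¹ else 0)
        ≤ N⁻¹ * Real.exp (-(t * a)) * (1 + (q - 1) * Real.exp t) ^ n := by
      rw [← key, Finset.mul_sum]
      refine Finset.sum_le_sum fun u _ => ?_
      by_cases h : (hammingDist u γ : ℝ) ≤ a
      · simp only [h, not_true_eq_false, if_false]
        positivity
      · simp only [h, not_false_eq_true, if_true]
        have hgt : a < (hammingDist u γ : ℝ) := lt_of_not_ge h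
        have h1 : (1 : ℝ) ≤ Real.exp (-(t * a)) * Real.exp (t * (hammingDist u γ : ℝ)) := by
          rw [← Real.exp_add]
          refine Real.one_le_exp ?_
          have := mul_le_mul_of_nonneg_left hgt.le ht0.le
          linarith
        calc N⁻¹ = N⁻¹ * 1 := by ring
          _ ≤ N⁻¹ * (Real.exp (-(t * a)) * Real.exp (t * (hammingDist u γ : ℝ))) :=
              mul_le_mul_of_nonneg_left h1 (by positivity)
          _ = N⁻¹ * Real.exp (-(t * a)) * Real.exp (t * (hammingDist u γ : ℝ)) := by ring
    -- bound the base
    have hbase : (1 + (q - 1) * Real.exp t) ≤ q * Real.exp ((1 - q⁻¹) * (Real.exp t - 1)) := by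
      have h1 : (1 : ℝ) + (1 - q⁻¹) * (Real.exp t - 1)
          ≤ Real.exp ((1 - q⁻¹) * (Real.exp t - 1)) := by
        have := Real.add_one_le_exp ((1 - q⁻¹) * (Real.exp t - 1))
        linarith
      have hqne : q ≠ 0 := ne_of_gt hq0
      have heq : 1 + (q - 1) * Real.exp t = q * (1 + (1 - q⁻¹) * (Real.exp t - 1)) := by
        field_simp
        ring
      rw [heq]
      exact mul_le_mul_of_nonneg_left h1 hq0.le
    have hbase0 : (0 : ℝ) ≤ 1 + (q - 1) * Real.exp t := by nlinarith
    have hpow : (1 + (q - 1) * Real.exp t) ^ n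
        ≤ N * Real.exp ((1 - q⁻¹) * (Real.exp t - 1) * n) := by
      calc (1 + (q - 1) * Real.exp t) ^ n
          ≤ (q * Real.exp ((1 - q⁻¹) * (Real.exp t - 1))) ^ n :=
            pow_le_pow_left₀ hbase0 hbase n
        _ = N * Real.exp ((1 - q⁻¹) * (Real.exp t - 1) * n) := by
            rw [mul_pow, ← Real.exp_nat_mul, hNdef]
            ring_nf
    have hfinal : N⁻¹ * Real.exp (-(t * a)) * (1 + (q - 1) * Real.exp t) ^ n ≤ E := by
      have h2 : N⁻¹ * Real.exp (-(t * a)) * (1 + (q - 1) * Real.exp t) ^ n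
          ≤ N⁻¹ * Real.exp (-(t * a)) * (N * Real.exp ((1 - q⁻¹) * (Real.exp t - 1) * n)) :=
        mul_le_mul_of_nonneg_left hpow (by positivity)
      have h3 : N⁻¹ * Real.exp (-(t * a)) * (N * Real.exp ((1 - q⁻¹) * (Real.exp t - 1) * n))
          = Real.exp ((1 - q⁻¹) * (Real.exp t - 1) * n - t * a) := by
        have hrw : (1 - q⁻¹) * (Real.exp t - 1) * n - t * a
            = -(t * a) + (1 - q⁻¹) * (Real.exp t - 1) * n := by ring
        rw [hrw, Real.exp_add]
        have hNne : N ≠ 0 := ne_of_gt hN0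
        field_simp
      have h4 : (1 - q⁻¹) * (Real.exp t - 1) * n - t * a ≤ -(δ ^ 2 * (1 - q⁻¹) * n / 3) := by
        rw [hadef]
        have hn0 : (0 : ℝ) ≤ (n : ℝ) := Nat.cast_nonneg n
        have hkey : Real.exp t - 1 - t * (1 + δ) ≤ -(δ ^ 2 / 3) := by
          rw [htdef] at hexp_t ⊢
          nlinarith [hexp_t]
        nlinarith [mul_le_mul_of_nonneg_right hkey (mul_nonneg hp0.le hn0)]
      calc N⁻¹ * Real.exp (-(t * a)) * (1 + (q - 1) * Real.exp t) ^ n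
          ≤ Real.exp ((1 - q⁻¹) * (Real.exp t - 1) * n - t * a) := by rw [← h3]; exact h2
        _ ≤ E := by rw [hEdef]; exact Real.exp_le_exp.mpr h4
    exact le_trans markov hfinal
  -- pointwise decomposition
  have point : ∀ (k : K) (u : Fin n → S),
      (1 : ℝ) ≤ (if u = Enc k then (1:ℝ) else 0)
        + (if ¬((hammingDist u (Enc k) : ℝ) ≤ a) then (1:ℝ) else 0)
        + (if Dec k u ≠ DecOut.invalid then (1:ℝ) else 0)
        + (if Dec k (resample a (Enc k) u) ≠ DecOut.tampered
              ∧ resample a (Enc k) u ≠ Enc k then (1:ℝ) else 0) := by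
    intro k u
    have nn1 : (0:ℝ) ≤ if u = Enc k then (1:ℝ) else 0 := by split <;> norm_num
    have nn2 : (0:ℝ) ≤ if ¬((hammingDist u (Enc k) : ℝ) ≤ a) then (1:ℝ) else 0 := by
      split <;> norm_num
    have nn3 : (0:ℝ) ≤ if Dec k u ≠ DecOut.invalid then (1:ℝ) else 0 := by split <;> norm_num
    have nn4 : (0:ℝ) ≤ if Dec k (resample a (Enc k) u) ≠ DecOut.tampered
        ∧ resample a (Enc k) u ≠ Enc k then (1:ℝ) else 0 := by split <;> norm_num
    by_cases h1 : u = Enc k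
    · rw [if_pos h1]; linarith
    by_cases h2 : (hammingDist u (Enc k) : ℝ) ≤ a
    · have hres : resample a (Enc k) u = u := by rw [resample, if_pos h2]
      by_cases h3 : Dec k u = DecOut.tampered
      · have h4 : Dec k u ≠ DecOut.invalid := by rw [h3]; intro h; exact DecOut.noConfusion h
        rw [if_pos h4]; linarith
      · have h4 : Dec k (resample a (Enc k) u) ≠ DecOut.tampered
            ∧ resample a (Enc k) u ≠ Enc k := by rw [hres]; exact ⟨h3, h1⟩
        rw [if_pos h4]; linarith
    · rw [if_pos h2]; linarith
  -- total mass
  have hcardfun : (Fintype.card (Fin n → S) : ℝ) = N := by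
    rw [Fintype.card_fun, Fintype.card_fin]
    push_cast
    rw [hNdef, hqdef]
  have htotal : (∑ k, ∑ u : Fin n → S, w k * N⁻¹) = 1 := by
    have hk : ∀ k : K, (∑ u : Fin n → S, w k * N⁻¹) = w k := by
      intro k
      rw [Finset.sum_const, Finset.card_univ, nsmul_eq_mul, hcardfun]
      field_simp
    rw [Finset.sum_congr rfl fun k _ => hk k, hw1]
  -- the four partial sums
  have hA : (∑ k, ∑ u : Fin n → S, w k * N⁻¹ * (if u = Enc k then (1:ℝ) else 0)) = N⁻¹ := by
    have hk : ∀ k : K, (∑ u : Fin n → S, w k * N⁻¹ * (if u = Enc k then (1:ℝ) else 0))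
        = w k * N⁻¹ := by
      intro k
      simp only [mul_ite, mul_one, mul_zero]
      rw [Finset.sum_ite_eq' Finset.univ (Enc k)]
      simp
    rw [Finset.sum_congr rfl fun k _ => hk k, ← Finset.sum_mul, hw1, one_mul]
  have hB : (∑ k, ∑ u : Fin n → S,
      w k * N⁻¹ * (if ¬((hammingDist u (Enc k) : ℝ) ≤ a) then (1:ℝ) else 0)) ≤ E := by
    have hk : ∀ k : K, (∑ u : Fin n → S,
        w k * N⁻¹ * (if ¬((hammingDist u (Enc k) : ℝ) ≤ a) then (1:ℝ) else 0))
        ≤ w k * E := by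
      intro k
      have heq : (∑ u : Fin n → S,
          w k * N⁻¹ * (if ¬((hammingDist u (Enc k) : ℝ) ≤ a) then (1:ℝ) else 0))
          = w k * (∑ u : Fin n → S,
            if ¬((hammingDist u (Enc k) : ℝ) ≤ a) then N⁻¹ else 0) := by
        rw [Finset.mul_sum]
        refine Finset.sum_congr rfl fun u _ => ?_
        split <;> ring
      rw [heq]
      exact mul_le_mul_of_nonneg_left (chernoff (Enc k)) (hw0 k)
    calc (∑ k, ∑ u : Fin n → S,
          w k * N⁻¹ * (if ¬((hammingDist u (Enc k) : ℝ) ≤ a) then (1:ℝ) else 0))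
        ≤ ∑ k, w k * E := Finset.sum_le_sum fun k _ => hk k
      _ = E := by rw [← Finset.sum_mul, hw1, one_mul]
  have hS : (∑ k, ∑ u : Fin n → S,
      w k * N⁻¹ * (if Dec k u ≠ DecOut.invalid then (1:ℝ) else 0)) ≤ εs := by
    rw [Finset.sum_comm]
    have hbound : ∀ u : Fin n → S,
        (∑ k, w k * N⁻¹ * (if Dec k u ≠ DecOut.invalid then (1:ℝ) else 0)) ≤ N⁻¹ * εs := by
      intro u
      have heq : (∑ k, w k * N⁻¹ * (if Dec k u ≠ DecOut.invalid then (1:ℝ) else 0))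
          = N⁻¹ * (∑ k, if Dec k u ≠ DecOut.invalid then w k else 0) := by
        rw [Finset.mul_sum]
        refine Finset.sum_congr rfl fun k _ => ?_
        split <;> ring
      rw [heq]
      exact mul_le_mul_of_nonneg_left (hsound u) (by positivity)
    calc (∑ u : Fin n → S, ∑ k, w k * N⁻¹ * (if Dec k u ≠ DecOut.invalid then (1:ℝ) else 0))
        ≤ ∑ u : Fin n → S, N⁻¹ * εs := Finset.sum_le_sum fun u _ => hbound u
      _ = εs := by
          rw [Finset.sum_const, Finset.card_univ, nsmul_eq_mul, hcardfun]
          field_simp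
  have hT : (∑ k, ∑ u : Fin n → S,
      w k * N⁻¹ * (if Dec k (resample a (Enc k) u) ≠ DecOut.tampered
        ∧ resample a (Enc k) u ≠ Enc k then (1:ℝ) else 0)) ≤ εt := by
    refine le_trans (le_of_eq ?_) htamper
    refine Finset.sum_congr rfl fun k _ => Finset.sum_congr rfl fun u _ => ?_
    split <;> ring
  -- combine
  have hmain : (1 : ℝ) ≤ N⁻¹ + E + εs + εt := by
    have hsum : (1 : ℝ) ≤ ∑ k, ∑ u : Fin n → S,
        (w k * N⁻¹ * (if u = Enc k then (1:ℝ) else 0)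
          + w k * N⁻¹ * (if ¬((hammingDist u (Enc k) : ℝ) ≤ a) then (1:ℝ) else 0)
          + w k * N⁻¹ * (if Dec k u ≠ DecOut.invalid then (1:ℝ) else 0)
          + w k * N⁻¹ * (if Dec k (resample a (Enc k) u) ≠ DecOut.tampered
              ∧ resample a (Enc k) u ≠ Enc k then (1:ℝ) else 0)) := by
      have hle : (∑ k, ∑ u : Fin n → S, w k * N⁻¹) ≤ ∑ k, ∑ u : Fin n → S,
          (w k * N⁻¹ * (if u = Enc k then (1:ℝ) else 0)
            + w k * N⁻¹ * (if ¬((hammingDist u (Enc k) : ℝ) ≤ a) then (1:ℝ) else 0)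
            + w k * N⁻¹ * (if Dec k u ≠ DecOut.invalid then (1:ℝ) else 0)
            + w k * N⁻¹ * (if Dec k (resample a (Enc k) u) ≠ DecOut.tampered
                ∧ resample a (Enc k) u ≠ Enc k then (1:ℝ) else 0)) := by
        refine Finset.sum_le_sum fun k _ => Finset.sum_le_sum fun u _ => ?_
        have hwN : 0 ≤ w k * N⁻¹ := mul_nonneg (hw0 k) (by positivity)
        have hmul := mul_le_mul_of_nonneg_left (point k u) hwN
        rw [mul_one] at hmul
        rw [mul_add, mul_add, mul_add] at hmul
        linarith
      rw [htotal] at hle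
      exact hle
    have hsplit : (∑ k, ∑ u : Fin n → S,
        (w k * N⁻¹ * (if u = Enc k then (1:ℝ) else 0)
          + w k * N⁻¹ * (if ¬((hammingDist u (Enc k) : ℝ) ≤ a) then (1:ℝ) else 0)
          + w k * N⁻¹ * (if Dec k u ≠ DecOut.invalid then (1:ℝ) else 0)
          + w k * N⁻¹ * (if Dec k (resample a (Enc k) u) ≠ DecOut.tampered
              ∧ resample a (Enc k) u ≠ Enc k then (1:ℝ) else 0)))
        = (∑ k, ∑ u : Fin n → S, w k * N⁻¹ * (if u = Enc k then (1:ℝ) else 0))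
          + (∑ k, ∑ u : Fin n → S,
              w k * N⁻¹ * (if ¬((hammingDist u (Enc k) : ℝ) ≤ a) then (1:ℝ) else 0))
          + (∑ k, ∑ u : Fin n → S,
              w k * N⁻¹ * (if Dec k u ≠ DecOut.invalid then (1:ℝ) else 0))
          + (∑ k, ∑ u : Fin n → S,
              w k * N⁻¹ * (if Dec k (resample a (Enc k) u) ≠ DecOut.tampered
                ∧ resample a (Enc k) u ≠ Enc k then (1:ℝ) else 0)) := by
      simp only [Finset.sum_add_distrib]
    rw [hsplit] at hsum
    linarith [hA, hB, hS, hT]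
  linarith [hmain]
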